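/- arXiv:1404.7407 — 4 statements merged into one kernel-verified Lean document; each statement's English description precedes it below -/
import Mathlib

section
/- A weighted digraph is weight-balanced if and only if the symmetric part Sym(L) = (L + Lᵀ)/2 of its out-Laplacian is positive semidefinite. -/
open Matrix

/-- A weighted digraph (with nonnegative weights) is weight-balanced iff the symmetric
part `Sym(L) = (L + Lᵀ)/2` of its out-Laplacian is positive semidefinite. -/
theorem weight_balanced_iff_sym_laplacian_posSemidef
    {N : ℕ} (A : Matrix (Fin N) (Fin N) ℝ)
    (hA : ∀ i j, 0 ≤ A i j)
    (L : Matrix (Fin N) (Fin N) ℝ)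
    (hL : L = Matrix.diagonal (fun i => ∑ j, A i j) - A) :
    (∀ i, (∑ j, A i j) = ∑ j, A j i) ↔ (((1:ℝ)/2) • (L + Lᵀ)).PosSemidef := by
  subst hL
  set L : Matrix (Fin N) (Fin N) ℝ :=
    Matrix.diagonal (fun i => ∑ j, A i j) - A with hL
  -- quadratic form of the symmetric part equals quadratic form of L
  have key : ∀ x : Fin N → ℝ,
      x ⬝ᵥ ((((1:ℝ)/2) • (L + Lᵀ)) *ᵥ x) = ∑ i, ∑ j, L i j * (x i * x j) := by
    intro x
    have h2 : ∑ i, ∑ j, L j i * (x i * x j) = ∑ i, ∑ j, L i j * (x i * x j) := by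
      rw [Finset.sum_comm]
      exact Finset.sum_congr rfl fun i _ => Finset.sum_congr rfl fun j _ => by ring
    simp only [dotProduct, mulVec, dotProduct, Matrix.smul_apply, Matrix.add_apply,
      Matrix.transpose_apply, smul_eq_mul, Finset.mul_sum]
    have expand : ∀ i j, x i * (1 / 2 * (L i j + L j i) * x j)
        = 1 / 2 * (L i j * (x i * x j)) + 1 / 2 * (L j i * (x i * x j)) := by
      intros; ring
    simp_rw [expand, Finset.sum_add_distrib, ← Finset.mul_sum, h2]
    ring
  -- expand L in the quadratic form
  have expandL : ∀ x : Fin N → ℝ,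
      ∑ i, ∑ j, L i j * (x i * x j)
        = (∑ i, ∑ j, A i j * x i ^ 2) - ∑ i, ∑ j, A i j * (x i * x j) := by
    intro x
    rw [hL]
    simp only [Matrix.sub_apply, Matrix.diagonal_apply, sub_mul, Finset.sum_sub_distrib,
      ite_mul, zero_mul]
    congr 1
    refine Finset.sum_congr rfl fun i _ => ?_
    rw [Finset.sum_ite_eq Finset.univ i (fun j => (∑ j, A i j) * (x i * x j))]
    simp [Finset.sum_mul]
    ring_nf
    exact Finset.sum_congr rfl fun _ _ => mul_comm _ _
  constructor
  · -- balanced → PSD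
    intro hbal
    refine posSemidef_iff_dotProduct_mulVec.mpr ⟨?_, ?_⟩
    · -- Hermitian
      ext i j
      simp [Matrix.conjTranspose_apply, Matrix.transpose_apply, Matrix.add_apply,
        Matrix.smul_apply]
      ring
    · intro x
      have hx : (star x : Fin N → ℝ) = x := star_trivial x
      rw [hx, key, expandL]
      have hswap : ∑ i, ∑ j, A i j * x i ^ 2 = ∑ i, ∑ j, A i j * x j ^ 2 := by
        simp_rw [← Finset.sum_mul]
        calc ∑ i, (∑ j, A i j) * x i ^ 2 = ∑ i, (∑ j, A j i) * x i ^ 2 := by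
              exact Finset.sum_congr rfl fun i _ => by rw [hbal i]
          _ = ∑ i, ∑ j, A j i * x i ^ 2 := by simp_rw [Finset.sum_mul]
          _ = ∑ i, ∑ j, A i j * x j ^ 2 := Finset.sum_comm
      have hquad : (∑ i, ∑ j, A i j * x i ^ 2) - ∑ i, ∑ j, A i j * (x i * x j)
          = (1/2) * ∑ i, ∑ j, A i j * (x i - x j) ^ 2 := by
        have : ∑ i, ∑ j, A i j * (x i - x j) ^ 2
            = (∑ i, ∑ j, A i j * x i ^ 2) + (∑ i, ∑ j, A i j * x j ^ 2)
              - 2 * ∑ i, ∑ j, A i j * (x i * x j) := by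
          simp only [Finset.mul_sum, ← Finset.sum_add_distrib, ← Finset.sum_sub_distrib]
          exact Finset.sum_congr rfl fun i _ => Finset.sum_congr rfl fun j _ => by ring
        rw [this, ← hswap]; ring
      rw [hquad]
      have hnn : 0 ≤ ∑ i, ∑ j, A i j * (x i - x j) ^ 2 :=
        Finset.sum_nonneg fun i _ => Finset.sum_nonneg fun j _ =>
          mul_nonneg (hA i j) (sq_nonneg _)
      linarith
  · -- PSD → balanced
    intro hM i
    have hx : ((((1:ℝ)/2) • (L + Lᵀ)) *ᵥ (fun _ => (1:ℝ))) = 0 := by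
      rw [← hM.dotProduct_mulVec_zero_iff]
      have h1 : (star (fun _ => (1:ℝ)) : Fin N → ℝ) = fun _ => (1:ℝ) := star_trivial _
      rw [h1, key, expandL]
      simp
    have := congrFun hx i
    simp only [mulVec, dotProduct, Matrix.smul_apply, Matrix.add_apply,
      Matrix.transpose_apply, smul_eq_mul, mul_one, Pi.zero_apply, hL,
      Matrix.sub_apply, Matrix.diagonal_apply] at this
    simp only [mul_add, mul_sub, Finset.sum_add_distrib, Finset.sum_sub_distrib,
      mul_ite, mul_zero, Finset.sum_ite_eq, Finset.sum_ite_eq', Finset.mem_univ,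
      if_true, ← Finset.mul_sum] at this
    linarith [this]
end

section
/- If L is the Laplacian of a weight-balanced strongly connected weighted digraph and R ∈ ℝ^{N×(N−1)} satisfies RᵀR = I_{N−1} and Rᵀ1_N = 0, then for every β > 0 and t ≥ t₀ ≥ 0, ‖e^{−β RᵀLR (t−t₀)}‖ ≤ e^{−β λ̂₂ (t−t₀)}, where λ̂₂ > 0 is the smallest nonzero eigenvalue of Sym(L) = (L+Lᵀ)/2. -/
open Matrix


theorem quadform_id {N : ℕ} (A : Matrix (Fin N) (Fin N) ℝ)
    (hbal : ∀ i, (∑ j, A i j) = ∑ j, A j i)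
    (L : Matrix (Fin N) (Fin N) ℝ)
    (hL : L = Matrix.diagonal (fun i => ∑ j, A i j) - A)
    (z : Fin N → ℝ) :
    z ⬝ᵥ ((((1:ℝ)/2) • (L + Lᵀ)) *ᵥ z)
      = (1/4) * ∑ i, ∑ j, (A i j + A j i) * ((z i - z j)^2) := by
  subst hL
  set D : ℝ := ∑ i, (∑ j, A i j) * z i ^ 2 with hDdef
  set C : ℝ := ∑ i, ∑ j, A i j * (z i * z j) with hCdef
  have hLz : z ⬝ᵥ ((Matrix.diagonal (fun i => ∑ j, A i j) - A) *ᵥ z) = D - C := by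
    rw [Matrix.sub_mulVec, dotProduct_sub]
    congr 1
    · simp only [dotProduct, Matrix.mulVec_diagonal, hDdef]
      exact Finset.sum_congr rfl fun i _ => by ring
    · simp only [dotProduct, Matrix.mulVec, dotProduct, hCdef, Finset.mul_sum]
      exact Finset.sum_congr rfl fun i _ => Finset.sum_congr rfl fun j _ => by ring
  have hLtz : ∀ M : Matrix (Fin N) (Fin N) ℝ, z ⬝ᵥ (Mᵀ *ᵥ z) = z ⬝ᵥ (M *ᵥ z) := by
    intro M
    rw [Matrix.dotProduct_mulVec, Matrix.vecMul_transpose, dotProduct_comm]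
  have lhs_eq : z ⬝ᵥ ((((1:ℝ)/2) • ((Matrix.diagonal (fun i => ∑ j, A i j) - A)
      + (Matrix.diagonal (fun i => ∑ j, A i j) - A)ᵀ)) *ᵥ z) = D - C := by
    rw [Matrix.smul_mulVec, Matrix.add_mulVec, dotProduct_smul, dotProduct_add,
      hLtz, hLz, smul_eq_mul]
    ring
  rw [lhs_eq]
  symm
  -- now the RHS
  have key : ∀ i j, (A i j + A j i) * ((z i - z j)^2)
      = (A i j * z i ^2 + A j i * z i ^2 + A i j * z j ^2 + A j i * z j ^2)
        - (2*(A i j * (z i * z j)) + 2*(A j i * (z i * z j))) := fun i j => by ring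
  have T1 : ∑ i, ∑ j, A i j * z i ^ 2 = D := by
    simp [hDdef, Finset.sum_mul]
  have T2 : ∑ i, ∑ j, A j i * z i ^ 2 = D := by
    simp only [hDdef]
    refine Finset.sum_congr rfl fun i _ => ?_
    rw [hbal i, Finset.sum_mul]
  have T3 : ∑ i, ∑ j, A i j * z j ^ 2 = D := by
    rw [Finset.sum_comm]
    simp only [hDdef]
    refine Finset.sum_congr rfl fun j _ => ?_
    rw [hbal j, Finset.sum_mul]
  have T4 : ∑ i, ∑ j, A j i * z j ^ 2 = D := by
    rw [Finset.sum_comm]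
    simp [hDdef, Finset.sum_mul]
  have T5 : ∑ i, ∑ j, A j i * (z i * z j) = C := by
    rw [Finset.sum_comm]
    simp only [hCdef]
    exact Finset.sum_congr rfl fun j _ => Finset.sum_congr rfl fun i _ => by ring
  calc (1/4 : ℝ) * ∑ i, ∑ j, (A i j + A j i) * ((z i - z j)^2)
      = (1/4) * ∑ i, ∑ j, ((A i j * z i ^2 + A j i * z i ^2 + A i j * z j ^2 + A j i * z j ^2)
        - (2*(A i j * (z i * z j)) + 2*(A j i * (z i * z j)))) := by
        congr 1; exact Finset.sum_congr rfl fun i _ => Finset.sum_congr rfl fun j _ => key i j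
    _ = (1/4) * ((∑ i, ∑ j, A i j * z i ^2) + (∑ i, ∑ j, A j i * z i ^2)
          + (∑ i, ∑ j, A i j * z j ^2) + (∑ i, ∑ j, A j i * z j ^2)
          - (2*(∑ i, ∑ j, A i j * (z i * z j)) + 2*(∑ i, ∑ j, A j i * (z i * z j)))) := by
        congr 1
        simp [Finset.sum_sub_distrib, Finset.sum_add_distrib, Finset.mul_sum]
    _ = D - C := by rw [T1, T2, T3, T4, T5, ← hCdef]; ring

theorem kernel_const {N : ℕ} (A : Matrix (Fin N) (Fin N) ℝ)
    (hA : ∀ i j, 0 ≤ A i j)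
    (hconn : ∀ i j : Fin N, Relation.ReflTransGen (fun a b => 0 < A a b) i j)
    (hbal : ∀ i, (∑ j, A i j) = ∑ j, A j i)
    (L : Matrix (Fin N) (Fin N) ℝ)
    (hL : L = Matrix.diagonal (fun i => ∑ j, A i j) - A)
    (v : Fin N → ℝ) (hv : (((1:ℝ)/2) • (L + Lᵀ)) *ᵥ v = 0) :
    ∀ i j, v i = v j := by
  have hq : (1/4 : ℝ) * ∑ i, ∑ j, (A i j + A j i) * ((v i - v j)^2) = 0 := by
    rw [← quadform_id A hbal L hL v, hv, dotProduct_zero]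
  have hsum : ∑ i, ∑ j, (A i j + A j i) * ((v i - v j)^2) = 0 := by linarith
  have hnn : ∀ i j : Fin N, 0 ≤ (A i j + A j i) * ((v i - v j)^2) :=
    fun i j => mul_nonneg (by linarith [hA i j, hA j i]) (sq_nonneg _)
  have hterm : ∀ i j : Fin N, (A i j + A j i) * ((v i - v j)^2) = 0 := by
    intro i j
    have h1 := (Finset.sum_eq_zero_iff_of_nonneg
      (fun i _ => Finset.sum_nonneg (fun j _ => hnn i j))).mp hsum i (Finset.mem_univ i)
    exact (Finset.sum_eq_zero_iff_of_nonneg (fun j _ => hnn i j)).mp h1 j (Finset.mem_univ j)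
  have hstep : ∀ i j : Fin N, 0 < A i j → v i = v j := by
    intro i j hpos
    have hc : 0 < A i j + A j i := by linarith [hA j i]
    have : (v i - v j)^2 = 0 := by
      rcases mul_eq_zero.mp (hterm i j) with h | h
      · exact absurd h hc.ne'
      · exact h
    have := pow_eq_zero_iff (n := 2) (by norm_num) |>.mp this
    linarith
  intro i j
  induction hconn i j with
  | refl => rfl
  | tail _ h2 ih => exact ih.trans (hstep _ _ h2)

theorem eigen_lower_bound {N : ℕ} (A : Matrix (Fin N) (Fin N) ℝ)
    (hA : ∀ i j, 0 ≤ A i j)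
    (hconn : ∀ i j : Fin N, Relation.ReflTransGen (fun a b => 0 < A a b) i j)
    (hbal : ∀ i, (∑ j, A i j) = ∑ j, A j i)
    (L : Matrix (Fin N) (Fin N) ℝ)
    (hL : L = Matrix.diagonal (fun i => ∑ j, A i j) - A)
    (lam2 : ℝ)
    (hlam2 : IsLeast {μ : ℝ | μ ≠ 0 ∧
      Module.End.HasEigenvalue
        (Matrix.toLin' (((1:ℝ)/2) • (L + Lᵀ)) : Module.End ℝ (Fin N → ℝ)) μ} lam2)
    (z : Fin N → ℝ) (hz : ∑ k, z k = 0) :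
    lam2 * (z ⬝ᵥ z) ≤ z ⬝ᵥ ((((1:ℝ)/2) • (L + Lᵀ)) *ᵥ z) := by
  set S : Matrix (Fin N) (Fin N) ℝ := ((1:ℝ)/2) • (L + Lᵀ) with hSdef
  have hSt : Sᵀ = S := by
    ext i j
    simp only [hSdef, Matrix.transpose_apply, Matrix.smul_apply, Matrix.add_apply,
      smul_eq_mul]
    ring
  have hS : S.IsHermitian := by
    ext i j
    simp only [Matrix.conjTranspose_apply, star_trivial]
    exact congrFun (congrFun hSt i) j
  set b := hS.eigenvectorBasis with hbdef
  set μ := hS.eigenvalues with hμdef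
  have hb : ∀ i, S *ᵥ ⇑(b i) = μ i • ⇑(b i) := fun i => hS.mulVec_eigenvectorBasis i
  set c : Fin N → ℝ := fun i => ⇑(b i) ⬝ᵥ z with hcdef
  -- inner products are dot products
  have hinner : ∀ x y : EuclideanSpace ℝ (Fin N),
      (inner ℝ x y : ℝ) = (WithLp.equiv 2 (Fin N → ℝ) x) ⬝ᵥ (WithLp.equiv 2 (Fin N → ℝ) y) := by
    intro x y
    simp [PiLp.inner_apply, dotProduct, RCLike.inner_apply, WithLp.equiv_apply]
    exact Finset.sum_congr rfl fun i _ => mul_comm _ _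
  set zE : EuclideanSpace ℝ (Fin N) := (WithLp.equiv 2 (Fin N → ℝ)).symm z with hzEdef
  have hzE : (WithLp.equiv 2 (Fin N → ℝ)) zE = z := rfl
  -- dot product with symmetric matrix
  have hmv : ∀ (w : Fin N → ℝ) i, ⇑(b i) ⬝ᵥ (S *ᵥ w) = μ i * (⇑(b i) ⬝ᵥ w) := by
    intro w i
    rw [Matrix.dotProduct_mulVec, ← Matrix.mulVec_transpose, hSt, hb i]
    simp [smul_dotProduct]
  -- coefficients on the kernel vanish
  have hzero : ∀ i, μ i = 0 → c i = 0 := by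
    intro i hi
    have hker : S *ᵥ ⇑(b i) = 0 := by rw [hb i, hi, zero_smul]
    have hconst := kernel_const A hA hconn hbal L hL _ hker
    have : c i = ∑ k, ⇑(b i) i * z k := by
      simp only [hcdef, dotProduct]
      exact Finset.sum_congr rfl fun k _ => by rw [hconst k i]
    rw [this, ← Finset.mul_sum, hz, mul_zero]
  -- nonzero eigenvalues are bounded below
  have hpos : ∀ i, μ i ≠ 0 → lam2 ≤ μ i := by
    intro i hi
    refine hlam2.2 ⟨hi, ?_⟩
    apply Module.End.hasEigenvalue_of_hasEigenvector (x := ⇑(b i))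
    constructor
    · rw [Module.End.mem_eigenspace_iff, Matrix.toLin'_apply, hb i]
    · have hne := b.orthonormal.ne_zero i
      intro h
      apply hne
      have : (WithLp.equiv 2 (Fin N → ℝ)) (b i) = 0 := h
      simpa using congrArg (WithLp.equiv 2 (Fin N → ℝ)).symm this
  -- Parseval expansions
  have expand1 : z ⬝ᵥ (S *ᵥ z) = ∑ i, μ i * (c i)^2 := by
    have hp := b.sum_inner_mul_inner zE ((WithLp.equiv 2 (Fin N → ℝ)).symm (S *ᵥ z))
    rw [hinner] at hp
    simp only [hzE, Equiv.apply_symm_apply] at hp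
    rw [← hp]
    refine Finset.sum_congr rfl fun i _ => ?_
    rw [hinner, hinner]
    simp only [Equiv.apply_symm_apply]
    have h1 : (WithLp.equiv 2 (Fin N → ℝ)) (b i) = ⇑(b i) := rfl
    rw [hzE, h1, hmv z i, dotProduct_comm]
    simp only [hcdef]
    ring
  have expand2 : z ⬝ᵥ z = ∑ i, (c i)^2 := by
    have hp := b.sum_inner_mul_inner zE zE
    rw [hinner] at hp
    simp only [hzE] at hp
    rw [← hp]
    refine Finset.sum_congr rfl fun i _ => ?_
    rw [hinner, hinner]
    have h1 : (WithLp.equiv 2 (Fin N → ℝ)) (b i) = ⇑(b i) := rfl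
    rw [hzE, h1, dotProduct_comm]
    simp only [hcdef]
    ring
  rw [expand1, expand2, Finset.mul_sum]
  refine Finset.sum_le_sum fun i _ => ?_
  by_cases hi : μ i = 0
  · rw [hzero i hi, hi]; simp
  · exact mul_le_mul_of_nonneg_right (hpos i hi) (sq_nonneg _)

open scoped RealInnerProductSpace in
theorem clm_exp_norm_le {E : Type*} [NormedAddCommGroup E] [InnerProductSpace ℝ E]
    [CompleteSpace E] (T : E →L[ℝ] E) (a : ℝ)
    (h : ∀ y : E, ⟪T y, y⟫ ≤ a * ‖y‖^2) :
    ‖NormedSpace.exp T‖ ≤ Real.exp a := by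
  refine ContinuousLinearMap.opNorm_le_bound _ (Real.exp_pos a).le fun x => ?_
  set f : ℝ → E := fun s => NormedSpace.exp (s • T) x with hfdef
  have hf : ∀ s : ℝ, HasDerivAt f (T (f s)) s := by
    intro s
    have h1 := hasDerivAt_exp_smul_const' (𝕂 := ℝ) T s
    have h2 := h1.clm_apply (hasDerivAt_const s x)
    simpa [ContinuousLinearMap.mul_apply] using h2
  set g : ℝ → ℝ := fun s => ⟪f s, f s⟫ with hgdef
  have hg : ∀ s : ℝ, HasDerivAt g (2 * ⟪T (f s), f s⟫) s := by
    intro s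
    have := (hf s).inner ℝ (hf s)
    simpa [hgdef, real_inner_comm, two_mul] using this
  set F : ℝ → ℝ := fun s => g s * Real.exp (-(2*a)*s) with hFdef
  have hF : ∀ s : ℝ, HasDerivAt F
      ((2 * ⟪T (f s), f s⟫ - 2*a * g s) * Real.exp (-(2*a)*s)) s := by
    intro s
    have he : HasDerivAt (fun s : ℝ => Real.exp (-(2*a)*s)) (-(2*a) * Real.exp (-(2*a)*s)) s := by
      simpa [mul_comm] using ((hasDerivAt_id s).const_mul (-(2*a))).exp
    have : HasDerivAt (fun y => g y * Real.exp (-(2*a)*y))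
        (2 * ⟪T (f s), f s⟫ * Real.exp (-(2*a)*s) + g s * (-(2*a) * Real.exp (-(2*a)*s))) s :=
      (hg s).mul he
    convert this using 1
    ring
  have hanti : Antitone F := by
    apply antitone_of_deriv_nonpos
    · exact fun s => (hF s).differentiableAt
    · intro s
      rw [(hF s).deriv]
      have h1 : ⟪T (f s), f s⟫ ≤ a * ‖f s‖^2 := h (f s)
      have h2 : g s = ‖f s‖^2 := real_inner_self_eq_norm_sq (f s)
      have h3 : (0:ℝ) < Real.exp (-(2*a)*s) := Real.exp_pos _
      have : 2 * ⟪T (f s), f s⟫ - 2*a * g s ≤ 0 := by rw [h2]; linarith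
      exact mul_nonpos_of_nonpos_of_nonneg this h3.le
  have key := hanti (show (0:ℝ) ≤ 1 by norm_num)
  have hF1 : F 1 = ‖NormedSpace.exp T x‖^2 * Real.exp (-(2*a)) := by
    simp only [hFdef, hgdef, hfdef, one_smul, real_inner_self_eq_norm_sq, mul_one]
  have hF0 : F 0 = ‖x‖^2 := by
    simp [hFdef, hgdef, hfdef, real_inner_self_eq_norm_sq, NormedSpace.exp_zero]
  rw [hF1, hF0] at key
  have hsq : ‖NormedSpace.exp T x‖^2 ≤ (Real.exp a * ‖x‖)^2 := by
    have he : Real.exp (-(2*a)) = (Real.exp a * Real.exp a)⁻¹ := by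
      rw [← Real.exp_add, ← Real.exp_neg]; ring_nf
    have hp : (0:ℝ) < Real.exp a * Real.exp a :=
      mul_pos (Real.exp_pos a) (Real.exp_pos a)
    rw [he] at key
    have h4 := mul_le_mul_of_nonneg_right key hp.le
    rw [inv_mul_cancel_right₀ hp.ne'] at h4
    calc ‖NormedSpace.exp T x‖^2 ≤ ‖x‖^2 * (Real.exp a * Real.exp a) := h4
      _ = (Real.exp a * ‖x‖)^2 := by ring
  exact le_of_pow_le_pow_left₀ two_ne_zero
    (mul_nonneg (Real.exp_pos a).le (norm_nonneg x)) hsq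

section
open scoped Matrix.Norms.L2Operator

theorem matrix_exp_toEuclideanCLM {m : Type*} [Fintype m] [DecidableEq m]
    (B : Matrix m m ℝ) :
    Matrix.toEuclideanCLM (𝕜 := ℝ) (NormedSpace.exp B)
      = NormedSpace.exp (Matrix.toEuclideanCLM (𝕜 := ℝ) B) := by
  have hiso : Isometry (Matrix.toEuclideanCLM (𝕜 := ℝ) (n := m)) :=
    AddMonoidHomClass.isometry_of_norm _ (fun x => rfl)
  letI : NormedRing (Matrix m m ℝ) := Matrix.linftyOpNormedRing
  letI : NormedAlgebra ℚ (Matrix m m ℝ) := Matrix.linftyOpNormedAlgebra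
  haveI : @CompleteSpace (Matrix m m ℝ) PseudoMetricSpace.toUniformSpace :=
    (inferInstance : CompleteSpace (m → m → ℝ))
  exact NormedSpace.map_exp (Matrix.toEuclideanCLM (𝕜 := ℝ) (n := m)) hiso.continuous B

end

/-- For a weight-balanced, strongly connected weighted digraph with out-Laplacian `L`
and an orthonormal complement `R` of the all-ones vector, for every `β > 0` and
`t ≥ t₀ ≥ 0` one has `‖e^{−β RᵀLR (t−t₀)}‖ ≤ e^{−β λ̂₂ (t−t₀)}`, where `λ̂₂ > 0` is the
smallest nonzero eigenvalue of `Sym(L) = (L + Lᵀ)/2` and `‖·‖` is the spectral norm. -/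
theorem exp_reduced_laplacian_norm_bound
    {N : ℕ} (A : Matrix (Fin N) (Fin N) ℝ)
    (hA : ∀ i j, 0 ≤ A i j)
    (hconn : ∀ i j : Fin N, Relation.ReflTransGen (fun a b => 0 < A a b) i j)
    (L : Matrix (Fin N) (Fin N) ℝ)
    (hL : L = Matrix.diagonal (fun i => ∑ j, A i j) - A)
    (hbal : ∀ i, (∑ j, A i j) = ∑ j, A j i)
    (R : Matrix (Fin N) (Fin (N - 1)) ℝ)
    (hR1 : Rᵀ * R = 1) (hR2 : Rᵀ *ᵥ (fun _ => (1:ℝ)) = 0)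
    (lam2 : ℝ) (hlam2pos : 0 < lam2)
    (hlam2 : IsLeast {μ : ℝ | μ ≠ 0 ∧
      Module.End.HasEigenvalue
        (Matrix.toLin' (((1:ℝ)/2) • (L + Lᵀ)) : Module.End ℝ (Fin N → ℝ)) μ} lam2)
    (β t t₀ : ℝ) (hβ : 0 < β) (ht₀ : 0 ≤ t₀) (ht : t₀ ≤ t) :
    ‖Matrix.toEuclideanCLM (𝕜 := ℝ)
        (NormedSpace.exp ((-(β * (t - t₀))) • (Rᵀ * L * R)))‖
      ≤ Real.exp (-(β * lam2 * (t - t₀))) := by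
  -- the reduced quadratic form bound
  have hred : ∀ y : Fin (N-1) → ℝ,
      lam2 * (y ⬝ᵥ y) ≤ y ⬝ᵥ ((Rᵀ * L * R) *ᵥ y) := by
    intro y
    set z : Fin N → ℝ := R *ᵥ y with hzdef
    have hz : ∑ k, z k = 0 := by
      have : (fun _ => (1:ℝ)) ⬝ᵥ z = 0 := by
        rw [hzdef, Matrix.dotProduct_mulVec, ← Matrix.mulVec_transpose, hR2,
          zero_dotProduct]
      simpa [dotProduct] using this
    have hyy : y ⬝ᵥ y = z ⬝ᵥ z := by
      rw [hzdef, Matrix.dotProduct_mulVec (R *ᵥ y), ← Matrix.mulVec_transpose,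
        Matrix.mulVec_mulVec, hR1, Matrix.one_mulVec, dotProduct_comm]
    have hq : y ⬝ᵥ ((Rᵀ * L * R) *ᵥ y) = z ⬝ᵥ (L *ᵥ z) := by
      rw [← Matrix.mulVec_mulVec, ← Matrix.mulVec_mulVec, Matrix.dotProduct_mulVec y,
        ← Matrix.mulVec_transpose, Matrix.transpose_transpose, ← hzdef,
        dotProduct_comm]
    have hLS : z ⬝ᵥ (L *ᵥ z) = z ⬝ᵥ ((((1:ℝ)/2) • (L + Lᵀ)) *ᵥ z) := by
      have hLt : z ⬝ᵥ (Lᵀ *ᵥ z) = z ⬝ᵥ (L *ᵥ z) := by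
        rw [Matrix.dotProduct_mulVec, Matrix.vecMul_transpose, dotProduct_comm]
      rw [Matrix.smul_mulVec, Matrix.add_mulVec, dotProduct_smul, dotProduct_add,
        hLt, smul_eq_mul]
      ring
    rw [hq, hLS, hyy]
    exact eigen_lower_bound A hA hconn hbal L hL lam2 hlam2 z hz
  -- move to the continuous linear map side
  rw [matrix_exp_toEuclideanCLM]
  set M := (-(β * (t - t₀))) • (Rᵀ * L * R) with hMdef
  have hc : 0 ≤ β * (t - t₀) := mul_nonneg hβ.le (by linarith)
  have hquad : ∀ y : EuclideanSpace ℝ (Fin (N-1)),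
      (inner ℝ (Matrix.toEuclideanCLM (𝕜 := ℝ) M y) y : ℝ)
        ≤ (-(β * lam2 * (t - t₀))) * ‖y‖^2 := by
    intro y
    set y' : Fin (N-1) → ℝ := WithLp.equiv 2 (Fin (N-1) → ℝ) y with hy'def
    have h1 : (inner ℝ (Matrix.toEuclideanCLM (𝕜 := ℝ) M y) y : ℝ)
        = (M *ᵥ y') ⬝ᵥ y' := by
      simp [PiLp.inner_apply, RCLike.inner_apply, dotProduct, WithLp.equiv_apply,
        hy'def]
      exact Finset.sum_congr rfl fun i _ => mul_comm _ _
    have h2 : ‖y‖^2 = y' ⬝ᵥ y' := by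
      rw [← real_inner_self_eq_norm_sq]
      simp [PiLp.inner_apply, RCLike.inner_apply, dotProduct, WithLp.equiv_apply, hy'def]
      rw [EuclideanSpace.norm_sq_eq]
      simp [sq]
    rw [h1, h2, hMdef]
    rw [Matrix.smul_mulVec, smul_dotProduct, smul_eq_mul]
    have h3 := hred y'
    have h4 : ((Rᵀ * L * R) *ᵥ y') ⬝ᵥ y' = y' ⬝ᵥ ((Rᵀ * L * R) *ᵥ y') :=
      dotProduct_comm _ _
    nlinarith [hc, h3, h4]
  have := clm_exp_norm_le (Matrix.toEuclideanCLM (𝕜 := ℝ) M)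
    (-(β * lam2 * (t - t₀))) hquad
  exact this
end

section
/- If e : [t₀,∞) → ℝ satisfies ė(t) ≤ α e(t) + c with e(t₀) = 0, α, c, ε > 0, and e(t) < ε on an interval [t₀, t₀ + τ) with τ = (1/α)ln(1 + αε/c), then any sequence of event times defined by successive first hitting times of the threshold ε (with reset of e to 0 at each event) has inter-event times uniformly lower bounded by τ > 0; in particular, the number of events in any finite interval [0, T] is at most ⌈T/τ⌉, so no Zeno behavior occurs. -/
/-- Event times defined by successive first hitting times of a threshold `ε`, with the
error reset to `0` at each event and satisfying `ė ≤ α e + c` in between, have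
inter-event times uniformly lower bounded by `τ = (1/α)ln(1 + αε/c) > 0`; in particular
the set of events occurring in any finite interval `[0, T]` is finite with indices at
most `⌈T/τ⌉`, so no Zeno behavior occurs. -/
theorem no_zeno_behavior
    (α c ε : ℝ) (hα : 0 < α) (hc : 0 < c) (hε : 0 < ε)
    (τ : ℝ) (hτ : τ = (1 / α) * Real.log (1 + α * ε / c))
    (t : ℕ → ℝ) (ht0 : t 0 = 0) (hmono : ∀ k, t k < t (k + 1))
    (e e' : ℕ → ℝ → ℝ)
    (hreset : ∀ k, e k (t k) = 0)
    (hnn : ∀ k s, t k ≤ s → s ≤ t (k + 1) → 0 ≤ e k s)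
    (hderiv : ∀ k s, t k ≤ s → s ≤ t (k + 1) → HasDerivAt (e k) (e' k s) s)
    (hbound : ∀ k s, t k ≤ s → s ≤ t (k + 1) → e' k s ≤ α * e k s + c)
    (hhit : ∀ k, e k (t (k + 1)) = ε)
    (hfirst : ∀ k s, t k ≤ s → s < t (k + 1) → e k s < ε) :
    (∀ k, τ ≤ t (k + 1) - t k) ∧
    (∀ T : ℝ, 0 ≤ T →
      {k : ℕ | t k ≤ T}.Finite ∧
      ∀ k : ℕ, 1 ≤ k → t k ≤ T → (k : ℝ) ≤ T / τ) := by
  have hτpos : 0 < τ := by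
    rw [hτ]
    have h1 : (0:ℝ) < α * ε / c := by positivity
    have h2 : 0 < Real.log (1 + α * ε / c) := Real.log_pos (by linarith)
    positivity
  have hgap : ∀ k, τ ≤ t (k + 1) - t k := by
    intro k
    set a := t k with ha
    set b := t (k + 1) with hb
    have hab : a < b := hmono k
    -- g s = (e k s + c/α) * exp (-α * (s - a)) is antitone on [a, b]
    set g : ℝ → ℝ := fun s => (e k s + c / α) * Real.exp (-α * (s - a)) with hg
    have hgderiv : ∀ s, a ≤ s → s ≤ b →
        HasDerivAt g ((e' k s) * Real.exp (-α * (s - a))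
          + (e k s + c / α) * (Real.exp (-α * (s - a)) * (-α))) s := by
      intro s hs1 hs2
      have h1 : HasDerivAt (fun s : ℝ => -α * (s - a)) (-α) s := by
        simpa using (((hasDerivAt_id s).sub_const a).const_mul (-α))
      have h2 := h1.exp
      exact ((hderiv k s hs1 hs2).add_const (c / α)).mul h2
    have hcont : ContinuousOn g (Set.Icc a b) := fun s hs =>
      ((hgderiv s hs.1 hs.2).continuousAt).continuousWithinAt
    have hanti : AntitoneOn g (Set.Icc a b) := by
      apply antitoneOn_of_deriv_nonpos (convex_Icc a b) hcont
      · intro s hs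
        rw [interior_Icc] at hs
        exact ((hgderiv s hs.1.le hs.2.le).differentiableAt).differentiableWithinAt
      intro s hs
      rw [interior_Icc] at hs
      have hs1 : a ≤ s := le_of_lt hs.1
      have hs2 : s ≤ b := le_of_lt hs.2
      rw [(hgderiv s hs1 hs2).deriv]
      have hb' := hbound k s hs1 hs2
      have hep := Real.exp_pos (-α * (s - a))
      have hca : α * (c / α) = c := by field_simp
      nlinarith [hep.le, mul_le_mul_of_nonneg_right hb' hep.le]
    have hkey : g b ≤ g a :=
      hanti (Set.left_mem_Icc.mpr hab.le) (Set.mem_Icc.mpr ⟨hab.le, le_rfl⟩) hab.le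
    have hga : g a = c / α := by simp [hg, ha, hreset k]
    have hgb : g b = (ε + c / α) * Real.exp (-α * (b - a)) := by
      simp [hg, hb, hhit k]
    rw [hga, hgb] at hkey
    -- (ε + c/α) * exp(-αΔ) ≤ c/α  ⇒  1 + αε/c ≤ exp(αΔ)
    have hΔ : 0 < b - a := sub_pos.mpr hab
    have hexp : 1 + α * ε / c ≤ Real.exp (α * (b - a)) := by
      have h1 : Real.exp (-α * (b - a)) = (Real.exp (α * (b - a)))⁻¹ := by
        rw [← Real.exp_neg]; ring_nf
      rw [h1] at hkey
      have hep := Real.exp_pos (α * (b - a))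
      have h2 : ε + c / α ≤ c / α * Real.exp (α * (b - a)) := by
        have h3 := mul_le_mul_of_nonneg_right hkey hep.le
        rwa [mul_assoc, inv_mul_cancel₀ hep.ne', mul_one] at h3
      have h4 : c * (1 + α * ε / c) = c + α * ε := by field_simp
      rw [← mul_le_mul_iff_right₀ hc, h4]
      nlinarith [mul_le_mul_of_nonneg_left h2 hα.le, mul_div_cancel₀ c hα.ne']
    have hlog : Real.log (1 + α * ε / c) ≤ α * (b - a) := by
      calc Real.log (1 + α * ε / c) ≤ Real.log (Real.exp (α * (b - a))) :=
            Real.log_le_log (by positivity) hexp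
        _ = α * (b - a) := Real.log_exp _
    rw [hτ]
    have h5 : (1 / α) * Real.log (1 + α * ε / c) ≤ (1 / α) * (α * (b - a)) :=
      mul_le_mul_of_nonneg_left hlog (by positivity)
    have h6 : (1 / α) * (α * (b - a)) = b - a := by field_simp
    linarith
  refine ⟨hgap, ?_⟩
  have htk : ∀ k : ℕ, (k : ℝ) * τ ≤ t k := by
    intro k
    induction k with
    | zero => simp [ht0]
    | succ n ih =>
      have := hgap n
      push_cast
      nlinarith
  intro T hT
  constructor
  · apply Set.Finite.subset (Set.finite_Iic ⌊T / τ⌋₊)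
    intro k hk
    simp only [Set.mem_Iic]
    apply Nat.le_floor
    rw [le_div_iff₀ hτpos]
    exact le_trans (htk k) hk
  · intro k hk1 hkT
    rw [le_div_iff₀ hτpos]
    exact le_trans (htk k) hkT
end

section
/- Laplacian cross-term bound: for any weighted undirected graph on N nodes with Laplacian L and any vectors x, x̂ ∈ ℝ^N with x̃ = x̂ − x, one has −xᵀLx − 2xᵀLx̃ ≤ (1/2) Σᵢ (4 d_out^i x̃ᵢ² − Σⱼ a_ij (x̂ᵢ − x̂ⱼ)²). -/
open Matrix

/-- Laplacian cross-term bound: for a weighted undirected graph with Laplacian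
`L = D − A` and any `x, x̂ ∈ ℝ^N` with `x̃ = x̂ − x`,
`−xᵀLx − 2xᵀLx̃ ≤ (1/2) Σᵢ (4 dᵢ x̃ᵢ² − Σⱼ aᵢⱼ (x̂ᵢ − x̂ⱼ)²)`. -/
theorem laplacian_cross_term_bound
    {N : ℕ} (A : Matrix (Fin N) (Fin N) ℝ)
    (hsym : ∀ i j, A i j = A j i) (hnn : ∀ i j, 0 ≤ A i j)
    (d : Fin N → ℝ) (hd : ∀ i, d i = ∑ j, A i j)
    (L : Matrix (Fin N) (Fin N) ℝ) (hL : L = Matrix.diagonal d - A)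
    (x xh : Fin N → ℝ) :
    -(x ⬝ᵥ (L *ᵥ x)) - 2 * (x ⬝ᵥ (L *ᵥ (xh - x)))
      ≤ (1 / 2) * ∑ i, (4 * d i * (xh i - x i) ^ 2
          - ∑ j, A i j * (xh i - xh j) ^ 2) := by
  -- abbreviation for the "tilde" vector
  set t : Fin N → ℝ := fun i => xh i - x i with ht
  -- the combined termwise quantity
  set D : Fin N → Fin N → ℝ := fun i j =>
    (1/2) * (4 * A i j * t i ^ 2 - A i j * (xh i - xh j) ^ 2)
    + A i j * (x i * (x i - x j))
    + 2 * (A i j * (x i * (t i - t j))) with hD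
  -- symmetrized term is a square
  have hterm : ∀ i j, D i j + D j i = A i j * (t i + t j) ^ 2 := by
    intro i j
    simp only [hD, ht, hsym j i]
    ring
  -- nonnegativity of the double sum of D
  have key : 0 ≤ ∑ i, ∑ j, D i j := by
    have hsw : ∑ i, ∑ j, D j i = ∑ i, ∑ j, D i j := Finset.sum_comm
    have h1 : 0 ≤ ∑ i, ∑ j, (D i j + D j i) := by
      refine Finset.sum_nonneg fun i _ => Finset.sum_nonneg fun j _ => ?_
      rw [hterm i j]
      exact mul_nonneg (hnn i j) (sq_nonneg _)
    have h2 : ∑ i, ∑ j, (D i j + D j i)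
        = (∑ i, ∑ j, D i j) + (∑ i, ∑ j, D j i) := by
      simp [Finset.sum_add_distrib]
    rw [h2, hsw] at h1
    linarith
  -- quadratic form as a double sum
  have hLv : ∀ (z : Fin N → ℝ) i, (L *ᵥ z) i = ∑ j, A i j * (z i - z j) := by
    intro z i
    rw [hL, Matrix.sub_mulVec, Pi.sub_apply, Matrix.mulVec_diagonal, hd i,
      Finset.sum_mul]
    simp [Matrix.mulVec, dotProduct, mul_sub, Finset.sum_sub_distrib]
  have hdot : ∀ (y z : Fin N → ℝ),
      y ⬝ᵥ (L *ᵥ z) = ∑ i, ∑ j, A i j * (y i * (z i - z j)) := by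
    intro y z
    simp only [dotProduct, hLv]
    refine Finset.sum_congr rfl fun i _ => ?_
    rw [Finset.mul_sum]
    exact Finset.sum_congr rfl fun j _ => by ring
  -- rewrite both dot products
  have hx : x ⬝ᵥ (L *ᵥ x) = ∑ i, ∑ j, A i j * (x i * (x i - x j)) := hdot x x
  have hxt : x ⬝ᵥ (L *ᵥ (xh - x))
      = ∑ i, ∑ j, A i j * (x i * (t i - t j)) := by
    rw [hdot x (xh - x)]
    refine Finset.sum_congr rfl fun i _ => Finset.sum_congr rfl fun j _ => ?_
    simp [ht]
  -- rewrite the RHS sum as a double sum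
  have hrhs : ∑ i, (4 * d i * (xh i - x i) ^ 2 - ∑ j, A i j * (xh i - xh j) ^ 2)
      = ∑ i, ∑ j, (4 * A i j * t i ^ 2 - A i j * (xh i - xh j) ^ 2) := by
    refine Finset.sum_congr rfl fun i _ => ?_
    rw [Finset.sum_sub_distrib, hd i]
    congr 1
    rw [Finset.mul_sum, Finset.sum_mul]
  -- combine everything
  have hcomb : ∑ i, ∑ j, D i j
      = (1/2) * (∑ i, ∑ j, (4 * A i j * t i ^ 2 - A i j * (xh i - xh j) ^ 2))
        + (∑ i, ∑ j, A i j * (x i * (x i - x j)))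
        + 2 * (∑ i, ∑ j, A i j * (x i * (t i - t j))) := by
    simp only [Finset.mul_sum, ← Finset.sum_add_distrib]
    rfl
  rw [hx, hxt, hrhs]
  linarith [key, hcomb]
end
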